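/- arXiv:math/0703894 — 3 statements merged into one kernel-verified Lean document; each statement's English description precedes it below -/
import Mathlib

section
/- Let σ : (ℕ → ℕ) → (ℕ → ℕ) be an order embedding with respect to the product (pointwise) order, whose range is order-convex. Then there exist a set K ⊆ ℕ, a bijection g : K → ℕ, and a function y : ℕ → ℕ such that for every x : ℕ → ℕ and every n ∈ ℕ: if n ∈ K then σ(x)(n) = x(g(n)) + y(n), and if n ∉ K then σ(x)(n) = y(n). -/
namespace ProdEmbAux

/-- The function supported at `m` with value `c`. -/
def sgl (m c : ℕ) : ℕ → ℕ := fun i => if i = m then c else 0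

lemma sgl_le_iff {m c : ℕ} {x : ℕ → ℕ} : sgl m c ≤ x ↔ c ≤ x m := by
  constructor
  · intro h; simpa [sgl] using h m
  · intro h i
    by_cases hi : i = m
    · subst hi; simpa [sgl] using h
    · simp [sgl, hi]

lemma sgl_mono {m c d : ℕ} (h : c ≤ d) : sgl m c ≤ sgl m d := by
  intro i; by_cases hi : i = m <;> simp [sgl, hi, h]

lemma eq_sgl_of_le_sgl {m k : ℕ} {u : ℕ → ℕ} (h : u ≤ sgl m k) : u = sgl m (u m) := by
  funext i
  by_cases hi : i = m
  · simp [hi, sgl]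
  · have h1 : u i ≤ sgl m k i := h i
    simp [sgl, hi] at h1 ⊢
    omega

section
variable {σ : (ℕ → ℕ) → (ℕ → ℕ)}

lemma injσ (hemb : ∀ x y : ℕ → ℕ, σ x ≤ σ y ↔ x ≤ y) : Function.Injective σ :=
  fun a b h => le_antisymm ((hemb a b).1 h.le) ((hemb b a).1 h.ge)

lemma base_le (hemb : ∀ x y : ℕ → ℕ, σ x ≤ σ y ↔ x ≤ y) (x : ℕ → ℕ) : σ 0 ≤ σ x :=
  (hemb 0 x).2 fun i => Nat.zero_le _

lemma between (hemb : ∀ x y : ℕ → ℕ, σ x ≤ σ y ↔ x ≤ y)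
    (hconv : ∀ a b c : ℕ → ℕ, a ∈ Set.range σ → c ∈ Set.range σ →
      a ≤ b → b ≤ c → b ∈ Set.range σ)
    (x : ℕ → ℕ) (n c : ℕ) (hc : σ 0 n + c ≤ σ x n) :
    ∃ u, u ≤ x ∧ σ u = fun t => σ 0 t + sgl n c t := by
  set b : ℕ → ℕ := fun t => σ 0 t + sgl n c t with hb
  have h1 : σ 0 ≤ b := fun t => Nat.le_add_right _ _
  have h2 : b ≤ σ x := by
    intro t
    by_cases ht : t = n
    · subst ht; simpa [hb, sgl] using hc
    · have h3 : σ 0 t ≤ σ x t := base_le hemb x t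
      simpa [hb, sgl, ht] using h3
  obtain ⟨u, hu⟩ := hconv (σ 0) b (σ x) ⟨0, rfl⟩ ⟨x, rfl⟩ h1 h2
  exact ⟨u, (hemb u x).1 (by rw [hu]; exact h2), hu⟩

lemma supp1 (hemb : ∀ x y : ℕ → ℕ, σ x ≤ σ y ↔ x ≤ y)
    (hconv : ∀ a b c : ℕ → ℕ, a ∈ Set.range σ → c ∈ Set.range σ →
      a ≤ b → b ≤ c → b ∈ Set.range σ)
    (m k a b : ℕ)
    (ha : σ 0 a < σ (sgl m k) a) (hb : σ 0 b < σ (sgl m k) b) : a = b := by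
  obtain ⟨u, hu, hσu⟩ := between hemb hconv (sgl m k) a 1 (by omega)
  obtain ⟨v, hv, hσv⟩ := between hemb hconv (sgl m k) b 1 (by omega)
  have hu' := eq_sgl_of_le_sgl hu
  have hv' := eq_sgl_of_le_sgl hv
  by_contra hab
  rcases le_total (u m) (v m) with h | h
  · have hle : σ u ≤ σ v := (hemb u v).2 (by rw [hu', hv']; exact sgl_mono h)
    have h1 : σ u a ≤ σ v a := hle a
    have h2 := congrFun hσu a
    have h3 := congrFun hσv a
    simp [sgl, hab] at h2 h3
    omega
  · have hle : σ v ≤ σ u := (hemb v u).2 (by rw [hu', hv']; exact sgl_mono h)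
    have h1 : σ v b ≤ σ u b := hle b
    have h2 := congrFun hσu b
    have h3 := congrFun hσv b
    simp [sgl, Ne.symm hab] at h2 h3
    omega

lemma offA (hemb : ∀ x y : ℕ → ℕ, σ x ≤ σ y ↔ x ≤ y)
    (hconv : ∀ a b c : ℕ → ℕ, a ∈ Set.range σ → c ∈ Set.range σ →
      a ≤ b → b ≤ c → b ∈ Set.range σ)
    (f : ℕ → ℕ) (hf : ∀ m, σ 0 (f m) < σ (sgl m 1) (f m))
    (m k i : ℕ) (hi : i ≠ f m) : σ (sgl m k) i = σ 0 i := by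
  rcases Nat.eq_zero_or_pos k with hk | hk
  · subst hk
    have h0 : sgl m 0 = (0 : ℕ → ℕ) := by funext t; simp [sgl]
    rw [h0]
  · by_contra hne
    have hb : σ 0 i ≤ σ (sgl m k) i := base_le hemb (sgl m k) i
    have h1 : σ 0 i < σ (sgl m k) i := lt_of_le_of_ne hb (Ne.symm hne)
    have h2' : σ (sgl m 1) (f m) ≤ σ (sgl m k) (f m) :=
      ((hemb _ _).2 (sgl_mono hk)) (f m)
    have h2 : σ 0 (f m) < σ (sgl m k) (f m) := lt_of_lt_of_le (hf m) h2'
    exact hi (supp1 hemb hconv m k i (f m) h1 h2)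

lemma claimB (hemb : ∀ x y : ℕ → ℕ, σ x ≤ σ y ↔ x ≤ y)
    (hconv : ∀ a b c : ℕ → ℕ, a ∈ Set.range σ → c ∈ Set.range σ →
      a ≤ b → b ≤ c → b ∈ Set.range σ)
    (f : ℕ → ℕ) (hf : ∀ m, σ 0 (f m) < σ (sgl m 1) (f m))
    (m k : ℕ) : σ (sgl m k) (f m) = σ 0 (f m) + k := by
  have hbase : σ 0 (f m) ≤ σ (sgl m k) (f m) := base_le hemb (sgl m k) (f m)
  obtain ⟨c, hc⟩ := Nat.exists_eq_add_of_le hbase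
  have hkc : k ≤ c := by
    have hmaps : ∀ j ∈ Finset.range (k+1),
        (fun j => σ (sgl m j) (f m) - σ 0 (f m)) j ∈ Finset.range (c+1) := by
      intro j hj
      simp only [Finset.mem_range] at hj ⊢
      have hle : σ (sgl m j) (f m) ≤ σ (sgl m k) (f m) :=
        ((hemb _ _).2 (sgl_mono (by omega))) (f m)
      omega
    have hinj : Set.InjOn (fun j => σ (sgl m j) (f m) - σ 0 (f m))
        (Finset.range (k+1)) := by
      intro j hj j' hj' hFF
      simp only at hFF
      have hbj : σ 0 (f m) ≤ σ (sgl m j) (f m) := base_le hemb (sgl m j) (f m)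
      have hbj' : σ 0 (f m) ≤ σ (sgl m j') (f m) := base_le hemb (sgl m j') (f m)
      have heq : σ (sgl m j) = σ (sgl m j') := by
        funext i
        by_cases hi : i = f m
        · subst hi; omega
        · rw [offA hemb hconv f hf m j i hi, offA hemb hconv f hf m j' i hi]
      have h2 := congrFun (injσ hemb heq) m
      simpa [sgl] using h2
    have := Finset.card_le_card_of_injOn _ hmaps hinj
    simpa using this
  have hck : c ≤ k := by
    have hU : ∀ i : ℕ, ∃ u, i ≤ c →
        (u ≤ sgl m k ∧ σ u = fun t => σ 0 t + sgl (f m) i t) := by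
      intro i
      by_cases hi : i ≤ c
      · obtain ⟨u, h1, h2⟩ := between hemb hconv (sgl m k) (f m) i (by omega)
        exact ⟨u, fun _ => ⟨h1, h2⟩⟩
      · exact ⟨0, fun h => absurd h hi⟩
    choose U hU using hU
    have hmaps : ∀ i ∈ Finset.range (c+1), (fun i => U i m) i ∈ Finset.range (k+1) := by
      intro i hi
      simp only [Finset.mem_range] at hi ⊢
      have h6 : U i m ≤ sgl m k m := (hU i (by omega)).1 m
      simp [sgl] at h6
      omega
    have hinj : Set.InjOn (fun i => U i m) (Finset.range (c+1)) := by
      intro i hi j hj hij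
      have hi2 : i < c + 1 := by simpa using hi
      have hj2 : j < c + 1 := by simpa using hj
      obtain ⟨hUle, hUσ⟩ := hU i (by omega)
      obtain ⟨hUle', hUσ'⟩ := hU j (by omega)
      have huu : U i = U j := by
        rw [eq_sgl_of_le_sgl hUle, eq_sgl_of_le_sgl hUle']
        simp only at hij
        rw [hij]
      have h2 : (fun t => σ 0 t + sgl (f m) i t) = fun t => σ 0 t + sgl (f m) j t := by
        rw [← hUσ, ← hUσ', huu]
      have h3 := congrFun h2 (f m)
      simpa [sgl] using h3
    have := Finset.card_le_card_of_injOn _ hmaps hinj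
    simpa using this
  omega

lemma pull (hemb : ∀ x y : ℕ → ℕ, σ x ≤ σ y ↔ x ≤ y)
    (hconv : ∀ a b c : ℕ → ℕ, a ∈ Set.range σ → c ∈ Set.range σ →
      a ≤ b → b ≤ c → b ∈ Set.range σ)
    (f : ℕ → ℕ) (finj : Function.Injective f)
    (hstruct : ∀ m k i, σ (sgl m k) i = σ 0 i + sgl (f m) k i)
    (x : ℕ → ℕ) (n c : ℕ) (hc1 : 1 ≤ c) (hc : σ 0 n + c ≤ σ x n) :
    ∃ m', f m' = n ∧ c ≤ x m' := by
  obtain ⟨u, hux, hσu⟩ := between hemb hconv x n c hc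
  have hsupp : ∀ t, 1 ≤ u t → f t = n := by
    intro t ht
    have h1 : σ (sgl t 1) ≤ σ u := (hemb _ _).2 (sgl_le_iff.2 ht)
    have h2 : σ (sgl t 1) (f t) ≤ σ u (f t) := h1 (f t)
    rw [hstruct t 1 (f t), hσu] at h2
    by_contra hne
    simp [sgl, hne] at h2
  have hu0 : ∃ m', 1 ≤ u m' := by
    by_contra h
    push_neg at h
    have hz : u = 0 := by
      funext t
      simp only [Pi.zero_apply]
      have := h t
      omega
    rw [hz] at hσu
    have h4 := congrFun hσu n
    simp [sgl] at h4
    omega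
  obtain ⟨m', hm'⟩ := hu0
  have hfm' := hsupp m' hm'
  have husgl : u = sgl m' (u m') := by
    funext t
    by_cases ht : t = m'
    · simp [ht, sgl]
    · simp only [sgl, if_neg ht]
      by_contra hne
      have h1 : 1 ≤ u t := by omega
      exact ht (finj ((hsupp t h1).trans hfm'.symm))
  have humc : u m' = c := by
    have h5 := congrFun hσu n
    rw [husgl] at h5
    rw [hstruct m' (u m') n, hfm'] at h5
    simp [sgl] at h5
    omega
  have hxm : u m' ≤ x m' := hux m'
  exact ⟨m', hfm', by omega⟩

end
end ProdEmbAux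

open ProdEmbAux in
/-- **Structure of product order embeddings of `ℕ^ℕ` with convex range.**
Every order embedding `σ : ℕ^ℕ → ℕ^ℕ` (with respect to the pointwise order) whose range
is order-convex is of the form `σ(x)(n) = x(g(n)) + y(n)` for `n ∈ K` and
`σ(x)(n) = y(n)` otherwise, for some `K ⊆ ℕ`, a bijection `g : K → ℕ` and `y ∈ ℕ^ℕ`. -/
theorem product_orderEmbedding_convex_range_structure
    (σ : (ℕ → ℕ) → (ℕ → ℕ))
    (hemb : ∀ x y : ℕ → ℕ, σ x ≤ σ y ↔ x ≤ y)
    (hconv : ∀ a b c : ℕ → ℕ, a ∈ Set.range σ → c ∈ Set.range σ →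
      a ≤ b → b ≤ c → b ∈ Set.range σ) :
    ∃ (K : Set ℕ) (g : K → ℕ) (y : ℕ → ℕ), Function.Bijective g ∧
      (∀ (x : ℕ → ℕ) (n : ℕ) (h : n ∈ K), σ x n = x (g ⟨n, h⟩) + y n) ∧
      (∀ (x : ℕ → ℕ) (n : ℕ), n ∉ K → σ x n = y n) := by
  classical
  have hF : ∀ m : ℕ, ∃ n, σ 0 n < σ (sgl m 1) n := by
    intro m
    by_contra h
    push_neg at h
    have heq : σ (sgl m 1) = σ 0 :=
      le_antisymm (fun n => h n) (base_le hemb (sgl m 1))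
    have := congrFun (injσ hemb heq) m
    simp [sgl] at this
  choose f hf using hF
  have hstruct : ∀ m k i, σ (sgl m k) i = σ 0 i + sgl (f m) k i := by
    intro m k i
    by_cases hi : i = f m
    · subst hi
      rw [claimB hemb hconv f hf m k]
      simp [sgl]
    · rw [offA hemb hconv f hf m k i hi]
      simp [sgl, hi]
  have finj : Function.Injective f := by
    intro m m' hmm
    by_contra hne
    have heq : σ (sgl m 1) = σ (sgl m' 1) := by
      funext i
      rw [hstruct, hstruct, hmm]
    have := congrFun (injσ hemb heq) m
    simp [sgl, hne] at this
  have hgex : ∀ n : Set.range f, ∃ m, f m = (n : ℕ) := fun n => n.2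
  choose g hg using hgex
  refine ⟨Set.range f, g, σ 0, ⟨?_, ?_⟩, ?_, ?_⟩
  · -- injective
    intro n1 n2 h12
    apply Subtype.ext
    rw [← hg n1, ← hg n2, h12]
  · -- surjective
    intro m
    exact ⟨⟨f m, ⟨m, rfl⟩⟩, finj (hg ⟨f m, ⟨m, rfl⟩⟩)⟩
  · -- on K
    intro x n hK
    have hm : f (g ⟨n, hK⟩) = n := hg ⟨n, hK⟩
    set m := g ⟨n, hK⟩ with hmdef
    have hlow : σ 0 n + x m ≤ σ x n := by
      have h1 : σ (sgl m (x m)) ≤ σ x := (hemb _ _).2 (sgl_le_iff.2 le_rfl)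
      have h2 : σ (sgl m (x m)) n ≤ σ x n := h1 n
      rw [hstruct m (x m) n, hm] at h2
      simpa [sgl] using h2
    have hbase : σ 0 n ≤ σ x n := base_le hemb x n
    obtain ⟨c, hc⟩ := Nat.exists_eq_add_of_le hbase
    rcases Nat.eq_zero_or_pos c with hc0 | hc1
    · omega
    · obtain ⟨m', hfm', hcx⟩ := pull hemb hconv f finj hstruct x n c hc1 (by omega)
      have hmm : m' = m := finj (hfm'.trans hm.symm)
      subst hmm
      omega
  · -- off K
    intro x n hK
    have hbase : σ 0 n ≤ σ x n := base_le hemb x n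
    by_contra hne
    have h1 : σ 0 n + 1 ≤ σ x n := by
      rcases lt_or_eq_of_le hbase with h | h
      · omega
      · exact absurd h.symm hne
    obtain ⟨m', hfm', -⟩ := pull hemb hconv f finj hstruct x n 1 le_rfl h1
    exact hK ⟨m', hfm'⟩
end

section
/- Let X be a Polish space (a separable, completely metrizable topological space). Then the space C(X, ℝ) of continuous real-valued functions on X, endowed with the compact-open topology, has the strong Pytkeev property: for every f ∈ C(X, ℝ) there exists a countable family 𝒩 of subsets of C(X, ℝ) such that for every neighborhood U of f and every set A ⊆ C(X, ℝ) with f in the closure of A but f ∉ A, there exists N ∈ 𝒩 with N ⊆ U and N ∩ A infinite. -/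
open Filter Set Metric

namespace StrongPytkeevAux

variable {X : Type*} [MetricSpace X]

/-- radius -/
noncomputable def rr (n : ℕ) : ℝ := 1 / ((n : ℝ) + 1)

lemma rr_pos (n : ℕ) : 0 < rr n := by
  have : (0:ℝ) < (n:ℝ) + 1 := by positivity
  simp [rr, this]

/-- finite unions of closed balls around the dense sequence -/
def FF (u : ℕ → X) (i n : ℕ) : Set X :=
  ⋃ j ∈ Finset.range (i + 1), closedBall (u j) (rr n)

lemma isClosed_FF (u : ℕ → X) (i n : ℕ) : IsClosed (FF u i n) :=
  (Finset.range (i+1)).finite_toSet.isClosed_biUnion fun _ _ => isClosed_closedBall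

lemma mem_FF_of (u : ℕ → X) {x : X} {j i n : ℕ} (hj : j ≤ i) (hx : dist x (u j) ≤ rr n) :
    x ∈ FF u i n :=
  Set.mem_iUnion₂.2 ⟨j, Finset.mem_range.2 (by omega), hx⟩

lemma FF_mono (u : ℕ → X) {i i' : ℕ} (h : i ≤ i') (n : ℕ) : FF u i n ⊆ FF u i' n := by
  intro x hx
  obtain ⟨j, hj, hxj⟩ := Set.mem_iUnion₂.1 hx
  have hj' : j ≤ i := Nat.lt_succ_iff.1 (Finset.mem_range.1 hj)
  exact mem_FF_of u (hj'.trans h) hxj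

def GG (u : ℕ → X) (l : List ℕ) : Set X :=
  ⋂ n ∈ Finset.range l.length, FF u (l.getD n 0) n

lemma GG_nil (u : ℕ → X) : GG u [] = Set.univ := by simp [GG]

lemma isClosed_GG (u : ℕ → X) (l : List ℕ) : IsClosed (GG u l) :=
  isClosed_biInter fun _ _ => isClosed_FF u _ _

lemma GG_append (u : ℕ → X) (l : List ℕ) (i : ℕ) :
    GG u (l ++ [i]) = GG u l ∩ FF u i l.length := by
  unfold GG
  rw [List.length_append]
  simp only [List.length_singleton]
  rw [Finset.range_add_one, Finset.set_biInter_insert,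
    List.getD_append_right l [i] 0 l.length le_rfl, Nat.sub_self, inter_comm]
  congr 1
  exact iInter₂_congr fun n hn => by
    rw [List.getD_append l [i] 0 n (Finset.mem_range.1 hn)]

/-- the network sets -/
def NN (u : ℕ → X) (f : C(X, ℝ)) (m : ℕ) (l : List ℕ) : Set C(X, ℝ) :=
  {g | ∀ x ∈ GG u l, dist (g x) (f x) < rr m}

lemma NN_append_anti (u : ℕ → X) (f : C(X, ℝ)) (m : ℕ) (l : List ℕ) {i i' : ℕ}
    (h : i ≤ i') : NN u f m (l ++ [i']) ⊆ NN u f m (l ++ [i]) := by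
  intro g hg x hx
  rw [GG_append] at hx
  exact hg x (by rw [GG_append]; exact ⟨hx.1, FF_mono u h _ hx.2⟩)

lemma NN_append_mono (u : ℕ → X) (f : C(X, ℝ)) (m : ℕ) (l : List ℕ) (i : ℕ) :
    NN u f m l ⊆ NN u f m (l ++ [i]) := by
  intro g hg x hx
  rw [GG_append] at hx
  exact hg x hx.1

end StrongPytkeevAux

open StrongPytkeevAux

/-- **Tsaban–Zdomskyy.** For each Polish space `X`, the space `C(X, ℝ)` of continuous
real-valued functions on `X`, endowed with the compact-open topology (the default
topology on `C(X, ℝ)` in Mathlib), has the strong Pytkeev property: for every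
`f ∈ C(X, ℝ)` there is a countable family `𝒩` of subsets of `C(X, ℝ)` such that for
every neighborhood `U` of `f` and every `A ⊆ C(X, ℝ)` with `f ∈ closure A \ A`,
some `N ∈ 𝒩` satisfies `N ⊆ U` and `N ∩ A` is infinite. -/
theorem continuousMap_strong_pytkeev (X : Type*) [TopologicalSpace X] [PolishSpace X]
    (f : C(X, ℝ)) :
    ∃ 𝒩 : Set (Set C(X, ℝ)), 𝒩.Countable ∧
      ∀ U ∈ nhds f, ∀ A : Set C(X, ℝ), f ∈ closure A → f ∉ A →
        ∃ N ∈ 𝒩, N ⊆ U ∧ (N ∩ A).Infinite := by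
  classical
  rcases isEmpty_or_nonempty X with hX | hX
  · -- trivial case : X empty, C(X, ℝ) is a subsingleton
    refine ⟨∅, countable_empty, fun U hU A hfA hfnA => absurd ?_ hfnA⟩
    obtain ⟨a, ha⟩ : A.Nonempty := by
      by_contra h
      rw [Set.not_nonempty_iff_eq_empty] at h
      subst h
      simp at hfA
    have : f = a := by ext x; exact (IsEmpty.false x).elim
    rwa [this]
  letI := TopologicalSpace.upgradeIsCompletelyMetrizable X
  obtain ⟨u, hu⟩ := TopologicalSpace.exists_dense_seq X
  -- the countable family
  refine ⟨Set.range (fun p : ℕ × List ℕ => NN u f p.1 p.2), Set.countable_range _, ?_⟩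
  intro U hU A hfA hfnA
  by_contra hcon
  push_neg at hcon
  have hcon' : ∀ (m : ℕ) (l : List ℕ), NN u f m l ⊆ U → (NN u f m l ∩ A).Finite := by
    intro m l hsub
    exact hcon _ ⟨(m, l), rfl⟩ hsub
  -- basis of neighborhoods of f
  have hbasis : (nhds f).HasBasis (fun Kε : Set X × ℝ => IsCompact Kε.1 ∧ 0 < Kε.2)
      (fun Kε => {g : C(X, ℝ) | ∀ x ∈ Kε.1, dist (f x) (g x) < Kε.2}) := by
    have h2 := (Metric.uniformity_basis_dist (α := ℝ)).compactConvergenceUniformity (α := X)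
    have h3 := nhds_basis_uniformity' h2 (x := f)
    convert h3 using 2 with Kε
    rfl
  rw [hbasis.mem_iff] at hU
  obtain ⟨⟨K, ε⟩, ⟨hK, hε⟩, hKU⟩ := hU
  obtain ⟨m, hm⟩ := exists_nat_one_div_lt hε
  have hmε : rr m < ε := hm
  -- every neighborhood of f meets A in an infinite set
  have hinf : ∀ V ∈ nhds f, (V ∩ A).Infinite := by
    intro V hV
    by_contra hfin
    rw [Set.not_infinite] at hfin
    have hne : f ∉ V ∩ A := fun h => hfnA h.2
    have hmem : V ∩ (V ∩ A)ᶜ ∈ nhds f :=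
      Filter.inter_mem hV (hfin.isClosed.isOpen_compl.mem_nhds hne)
    obtain ⟨a, ⟨haV, hac⟩, haA⟩ := mem_closure_iff_nhds.1 hfA _ hmem
    exact hac ⟨haV, haA⟩
  -- finiteness of traces for admissible indices
  have hfinN : ∀ l : List ℕ, K ⊆ GG u l → (NN u f m l ∩ A).Finite := by
    intro l hKl
    refine hcon' m l fun g hg => hKU ?_
    simp only [Set.mem_setOf_eq]
    intro x hx
    rw [dist_comm]
    exact lt_trans (hg x (hKl hx)) hmε
  -- covering K at each scale
  have hcover : ∀ len : ℕ, ∃ i, K ⊆ FF u i len := by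
    intro len
    obtain ⟨t, ht⟩ := hK.elim_finite_subcover (fun j => ball (u j) (rr len))
      (fun j => isOpen_ball) (by
        intro x hx
        obtain ⟨j, hj⟩ := Metric.denseRange_iff.1 hu x (rr len) (rr_pos len)
        exact Set.mem_iUnion.2 ⟨j, hj⟩)
    refine ⟨t.sup id, fun x hx => ?_⟩
    obtain ⟨j, hj, hxj⟩ := Set.mem_iUnion₂.1 (ht hx)
    exact mem_FF_of u (by simpa using Finset.le_sup (f := id) hj)
      (le_of_lt (mem_ball.1 hxj))
  -- the key step lemma
  have hstep : ∀ l : List ℕ, K ⊆ GG u l →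
      ∃ n : ℕ, K ⊆ FF u n l.length ∧ NN u f m (l ++ [n]) ∩ A ⊆ NN u f m l ∩ A := by
    intro l hKl
    obtain ⟨i₀, hi₀⟩ := hcover l.length
    have hKl' : K ⊆ GG u (l ++ [i₀]) := by
      rw [GG_append]; exact Set.subset_inter hKl hi₀
    have hB : (NN u f m (l ++ [i₀]) ∩ A).Finite := hfinN _ hKl'
    have hex : ∀ e ∈ (NN u f m (l ++ [i₀]) ∩ A) \ NN u f m l,
        ∃ p : ℕ, ∀ q, p ≤ q → e ∉ NN u f m (l ++ [q]) := by
      rintro e ⟨-, he⟩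
      simp only [NN, Set.mem_setOf_eq, not_forall] at he
      obtain ⟨x, hxG, hxd⟩ := he
      obtain ⟨j, hj⟩ := Metric.denseRange_iff.1 hu x (rr l.length) (rr_pos _)
      refine ⟨j, fun q hq hmem => hxd ?_⟩
      refine hmem x ?_
      rw [GG_append]
      exact ⟨hxG, mem_FF_of u hq (le_of_lt hj)⟩
    choose! φ hφ using hex
    have hB' : ((NN u f m (l ++ [i₀]) ∩ A) \ NN u f m l).Finite :=
      hB.subset Set.diff_subset
    set n := max i₀ (hB'.toFinset.sup φ) with hn
    refine ⟨n, (hi₀.trans (FF_mono u (le_max_left _ _) _)), ?_⟩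
    rintro a ⟨haN, haA⟩
    have haB : a ∈ NN u f m (l ++ [i₀]) ∩ A :=
      ⟨NN_append_anti u f m l (le_max_left _ _) haN, haA⟩
    by_contra hna
    have hna' : a ∉ NN u f m l := fun h => hna ⟨h, haA⟩
    have hmemd : a ∈ (NN u f m (l ++ [i₀]) ∩ A) \ NN u f m l := ⟨haB, hna'⟩
    have hφa : φ a ≤ n :=
      le_trans (Finset.le_sup (hB'.mem_toFinset.2 hmemd)) (le_max_right _ _)
    exact hφ a hmemd n hφa haN
  -- choice function for the recursion
  let st : List ℕ → ℕ := fun l =>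
    if h : K ⊆ GG u l then Classical.choose (hstep l h) else 0
  have hst : ∀ l (h : K ⊆ GG u l), K ⊆ FF u (st l) l.length ∧
      NN u f m (l ++ [st l]) ∩ A ⊆ NN u f m l ∩ A := by
    intro l h
    simp only [st, dif_pos h]
    exact Classical.choose_spec (hstep l h)
  -- the recursive sequence of lists
  let T : ℕ → List ℕ := fun k => Nat.rec [] (fun _ l => l ++ [st l]) k
  have hT0 : T 0 = [] := rfl
  have hTs : ∀ k, T (k + 1) = T k ++ [st (T k)] := fun _ => rfl
  have hTlen : ∀ k, (T k).length = k := by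
    intro k
    induction k with
    | zero => rfl
    | succ k ih => rw [hTs, List.length_append, ih]; rfl
  have hKT : ∀ k, K ⊆ GG u (T k) := by
    intro k
    induction k with
    | zero => rw [hT0, GG_nil]; exact Set.subset_univ K
    | succ k ih =>
        rw [hTs, GG_append]
        exact Set.subset_inter ih (hst (T k) ih).1
  have hTmono : ∀ k k', k ≤ k' → GG u (T k') ⊆ GG u (T k) := by
    intro k k' h
    induction k' with
    | zero => rw [Nat.le_zero.1 h]
    | succ k' ih =>
        rcases Nat.lt_or_ge k (k' + 1) with h' | h'
        · refine subset_trans ?_ (ih (Nat.lt_succ_iff.1 h'))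
          rw [hTs, GG_append]
          exact Set.inter_subset_left
        · rw [Nat.le_antisymm h h']
  have htrace : ∀ k, NN u f m (T k) ∩ A ⊆ NN u f m (T 0) ∩ A := by
    intro k
    induction k with
    | zero => exact subset_rfl
    | succ k ih => exact subset_trans (by rw [hTs]; exact (hst (T k) (hKT k)).2) ih
  -- the limit compact set
  set C : Set X := ⋂ k, GG u (T k) with hC
  have hCsub : ∀ k, C ⊆ GG u (T k) := fun k => Set.iInter_subset _ k
  have hGF : ∀ n, GG u (T (n + 1)) ⊆ FF u ((T (n + 1)).getD n 0) n := by
    intro n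
    intro x hx
    have : n ∈ Finset.range (T (n + 1)).length := by
      rw [hTlen (n+1)]; exact Finset.mem_range.2 (Nat.lt_succ_self n)
    exact Set.mem_iInter₂.1 hx n this
  -- total boundedness helper
  have htb : ∀ s : Set X, (∀ n : ℕ, ∃ (t : Set X), t.Finite ∧
      s ⊆ t ∪ FF u ((T (n+1)).getD n 0) n) → TotallyBounded s := by
    intro s hs
    rw [Metric.totallyBounded_iff]
    intro δ hδ
    obtain ⟨n, hn⟩ := exists_nat_one_div_lt hδ
    have hrr : rr n < δ := hn
    obtain ⟨t, htf, hts⟩ := hs n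
    set i := (T (n+1)).getD n 0
    refine ⟨t ∪ (u '' (Finset.range (i+1) : Finset ℕ)), htf.union ((Finset.range (i+1)).finite_toSet.image u), ?_⟩
    intro x hx
    rcases hts hx with hx' | hx'
    · exact Set.mem_biUnion (Set.mem_union_left _ hx') (mem_ball_self hδ)
    · obtain ⟨j, hj, hxj⟩ := Set.mem_iUnion₂.1 hx'
      refine Set.mem_biUnion (Set.mem_union_right _ ⟨j, by simpa using hj, rfl⟩) ?_
      exact mem_ball.2 (lt_of_le_of_lt (mem_closedBall.1 hxj) hrr)
  have hCtb : TotallyBounded C := by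
    refine htb C fun n => ⟨∅, Set.finite_empty, ?_⟩
    intro x hx
    exact Or.inr (hGF n (hCsub (n+1) hx))
  have hCclosed : IsClosed C := isClosed_iInter fun k => isClosed_GG u (T k)
  have hCcomp : IsCompact C := hCtb.isCompact_of_isClosed hCclosed
  -- the squeeze: open sets containing C contain some G (T k)
  have hsq : ∀ O : Set X, IsOpen O → C ⊆ O → ∃ k, GG u (T k) ⊆ O := by
    intro O hO hCO
    by_contra hno
    push_neg at hno
    simp only [Set.not_subset] at hno
    choose y hy hyO using hno
    have hytb : TotallyBounded (Set.range y) := by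
      refine htb _ fun n => ⟨y '' (Set.Iio (n+1)), (Set.finite_Iio _).image y, ?_⟩
      rintro x ⟨k, rfl⟩
      rcases Nat.lt_or_ge k (n+1) with h | h
      · exact Or.inl ⟨k, h, rfl⟩
      · exact Or.inr (hGF n (hTmono (n+1) k h (hy k)))
    have hYcomp : IsCompact (closure (Set.range y)) :=
      hytb.closure.isCompact_of_isClosed isClosed_closure
    set Z : ℕ → Set X := fun k => closure (y '' Set.Ici k) with hZ
    have hZanti : ∀ {a b : ℕ}, a ≤ b → Z b ⊆ Z a := fun h =>
      closure_mono (Set.image_mono (Set.Ici_subset_Ici.2 h))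
    have hZne : ∀ k, (Z k).Nonempty := fun k =>
      ⟨y k, subset_closure ⟨k, Set.self_mem_Ici, rfl⟩⟩
    have hZcomp : ∀ k, IsCompact (Z k) := fun k =>
      hYcomp.of_isClosed_subset isClosed_closure
        (closure_mono (by rintro _ ⟨j, -, rfl⟩; exact ⟨j, rfl⟩))
    have hZdir : Directed (· ⊇ ·) Z := fun a b =>
      ⟨max a b, hZanti (le_max_left a b), hZanti (le_max_right a b)⟩
    obtain ⟨y₀, hy₀⟩ := IsCompact.nonempty_iInter_of_directed_nonempty_isCompact_isClosed
      Z hZdir hZne hZcomp (fun k => isClosed_closure)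
    have hy₀C : y₀ ∈ C := by
      refine Set.mem_iInter.2 fun k => ?_
      have : Z k ⊆ GG u (T k) := by
        refine closure_minimal ?_ (isClosed_GG u (T k))
        rintro _ ⟨j, hj, rfl⟩
        exact hTmono k j hj (hy j)
      exact this (Set.mem_iInter.1 hy₀ k)
    have hy₀O : y₀ ∉ O := by
      have : Z 0 ⊆ Oᶜ := by
        refine closure_minimal ?_ hO.isClosed_compl
        rintro _ ⟨j, -, rfl⟩
        exact hyO j
      exact this (Set.mem_iInter.1 hy₀ 0)
    exact hy₀O (hCO hy₀C)
  -- conclude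
  have hA₁ : (NN u f m (T 0) ∩ A).Finite := by
    rw [hT0]
    exact hfinN [] (by rw [GG_nil]; exact Set.subset_univ K)
  have hV : {g : C(X, ℝ) | ∀ x ∈ C, dist (f x) (g x) < rr m} ∈ nhds f :=
    hbasis.mem_of_mem (i := (C, rr m)) ⟨hCcomp, rr_pos m⟩
  obtain ⟨h, hh⟩ := ((hinf _ hV).diff hA₁).nonempty
  obtain ⟨⟨hhV, hhA⟩, hhA₁⟩ := hh
  have hO : IsOpen {x : X | dist (h x) (f x) < rr m} :=
    isOpen_lt (Continuous.dist h.continuous f.continuous) continuous_const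
  have hCO : C ⊆ {x | dist (h x) (f x) < rr m} := by
    intro x hx
    simp only [Set.mem_setOf_eq]
    rw [dist_comm]
    exact hhV x hx
  obtain ⟨k, hk⟩ := hsq _ hO hCO
  exact hhA₁ (htrace k ⟨fun x hx => hk hx, hhA⟩)
end

section
/- Every wQN set of reals has the Hurewicz property: if X ⊆ ℝ (with the subspace topology) is a wQN-space, then for every sequence (𝒰ₙ)ₙ∈ℕ of open covers of X there exist finite subfamilies ℱₙ ⊆ 𝒰ₙ such that every x ∈ X belongs to ⋃ℱₙ for all but finitely many n. -/
open Filter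

/-- `X` is a wQN-space: every sequence of continuous real-valued functions converging
pointwise to `0` has a subsequence converging quasi-normally, i.e. there is a sequence
`(ε k)` of positive reals converging to `0` such that for each `x`,
`|f (φ k) x| < ε k` for all but finitely many `k`. -/
def IsWQNSpace (X : Type*) [TopologicalSpace X] : Prop :=
  ∀ f : ℕ → X → ℝ, (∀ n, Continuous (f n)) →
    (∀ x, Tendsto (fun n => f n x) atTop (nhds 0)) →
    ∃ φ : ℕ → ℕ, StrictMono φ ∧
      ∃ ε : ℕ → ℝ, (∀ k, 0 < ε k) ∧ Tendsto ε atTop (nhds 0) ∧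
        ∀ x, ∀ᶠ k in atTop, |f (φ k) x| < ε k

/-- `X` has the Hurewicz property `U_fin(𝒪, Γ)`: for every sequence of open covers
`(𝒰 n)` there are finite subfamilies `F n ⊆ 𝒰 n` such that every point belongs to
`⋃ (F n)` for all but finitely many `n`. -/
def HurewiczProperty (X : Type*) [TopologicalSpace X] : Prop :=
  ∀ 𝒰 : ℕ → Set (Set X),
    (∀ n, (∀ U ∈ 𝒰 n, IsOpen U) ∧ ⋃₀ 𝒰 n = Set.univ) →
    ∃ F : ℕ → Set (Set X), (∀ n, F n ⊆ 𝒰 n ∧ (F n).Finite) ∧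
      ∀ x : X, ∀ᶠ n in atTop, x ∈ ⋃₀ F n

/-- **Every wQN set of reals has the Hurewicz property.** -/
theorem hurewicz_of_wQN (X : Set ℝ) (h : IsWQNSpace X) : HurewiczProperty X := by
  intro 𝒰 h𝒰
  rcases isEmpty_or_nonempty X with hX | hX
  · exact ⟨fun _ => ∅, fun n => ⟨Set.empty_subset _, Set.finite_empty⟩,
      fun x => (hX.false x).elim⟩
  -- Step 1: countable subcovers
  have hsub : ∀ n, ∃ V : ℕ → Set X, (∀ j, V j ∈ 𝒰 n) ∧ ∀ x : X, ∃ j, x ∈ V j := by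
    intro n
    obtain ⟨T, hTc, hTs, hTu⟩ :=
      TopologicalSpace.isOpen_sUnion_countable (𝒰 n) (h𝒰 n).1
    rw [(h𝒰 n).2] at hTu
    have hTne : T.Nonempty := by
      rcases hX with ⟨x⟩
      have : (x : X) ∈ ⋃₀ T := hTu ▸ Set.mem_univ _
      rcases this with ⟨t, ht, -⟩
      exact ⟨t, ht⟩
    obtain ⟨V, hV⟩ := hTc.exists_eq_range hTne
    refine ⟨V, fun j => hTs (hV ▸ Set.mem_range_self j), fun x => ?_⟩
    have : (x : X) ∈ ⋃₀ T := hTu ▸ Set.mem_univ _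
    rcases this with ⟨t, ht, hxt⟩
    rw [hV] at ht
    rcases ht with ⟨j, rfl⟩
    exact ⟨j, hxt⟩
  choose V hVmem hVcov using hsub
  -- Step 2: open extensions in ℝ
  have hext : ∀ n j, ∃ W : Set ℝ, IsOpen W ∧ Subtype.val ⁻¹' W = V n j := by
    intro n j
    exact isOpen_induced_iff.mp ((h𝒰 n).1 _ (hVmem n j))
  choose W hWopen hWeq using hext
  -- the auxiliary open sets
  set O : ℕ → ℕ → Set ℝ := fun n m => (⋃ j ∈ Set.Iic m, W n j) ∩ Metric.ball 0 (2 ^ m)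
    with hO
  have hOopen : ∀ n m, IsOpen (O n m) :=
    fun n m => ((isOpen_biUnion fun j _ => hWopen n j).inter Metric.isOpen_ball)
  have hOmono : ∀ n {m m'}, m ≤ m' → O n m ⊆ O n m' := by
    intro n m m' hmm'
    refine Set.inter_subset_inter ?_ (Metric.ball_subset_ball ?_)
    · exact Set.biUnion_subset_biUnion_left (Set.Iic_subset_Iic.mpr hmm')
    · exact pow_le_pow_right₀ one_le_two hmm'
  have hOcne : ∀ n m, (O n m)ᶜ.Nonempty := by
    intro n m
    refine ⟨(2 : ℝ) ^ m, fun hc => ?_⟩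
    have := hc.2
    rw [Metric.mem_ball, Real.dist_eq, sub_zero, abs_of_pos (by positivity)] at this
    exact lt_irrefl _ this
  -- the bump functions
  set g : ℕ → ℕ → ℝ → ℝ :=
    fun n m y => min 1 (max 0 (2 - 2 ^ m * Metric.infDist y (O n m)ᶜ)) with hg
  have hgcont : ∀ n m, Continuous (g n m) := by
    intro n m
    exact continuous_const.min (continuous_const.max
      (continuous_const.sub (continuous_const.mul (Metric.continuous_infDist_pt _))))
  have hg0 : ∀ n m y, 0 ≤ g n m y := fun n m y =>
    le_min zero_le_one (le_max_left _ _)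
  have hg1 : ∀ n m y, g n m y ≤ 1 := fun n m y => min_le_left _ _
  -- g < 1 implies membership
  have hgmem : ∀ n m y, g n m y < 1 → y ∈ O n m := by
    intro n m y hlt
    have h1 : max 0 (2 - 2 ^ m * Metric.infDist y (O n m)ᶜ) < 1 := by
      rcases min_lt_iff.mp hlt with h | h
      · exact absurd h (lt_irrefl _)
      · exact h
    have h2 : 2 - 2 ^ m * Metric.infDist y (O n m)ᶜ < 1 :=
      lt_of_le_of_lt (le_max_right _ _) h1
    have h3 : (0 : ℝ) < 2 ^ m * Metric.infDist y (O n m)ᶜ := by linarith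
    have h4 : 0 < Metric.infDist y (O n m)ᶜ := by
      by_contra hc
      push_neg at hc
      nlinarith [pow_pos (by norm_num : (0:ℝ) < 2) m]
    by_contra hy
    exact absurd (Metric.infDist_zero_of_mem (show y ∈ (O n m)ᶜ from hy)) (ne_of_gt h4)
  -- g is eventually zero in m, for fixed n and x ∈ X
  have hgev : ∀ n (x : X), ∀ᶠ m in atTop, g n m (x : ℝ) = 0 := by
    intro n x
    obtain ⟨j, hj⟩ := hVcov n x
    have hxW : (x : ℝ) ∈ W n j := by rw [← hWeq n j] at hj; exact hj
    obtain ⟨M1, hM1⟩ := pow_unbounded_of_one_lt |(x : ℝ)| (by norm_num : (1:ℝ) < 2)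
    set M := max j M1 with hM
    have hxO : (x : ℝ) ∈ O n M := by
      constructor
      · exact Set.mem_biUnion (Set.mem_Iic.mpr (le_max_left _ _)) hxW
      · rw [Metric.mem_ball, Real.dist_eq, sub_zero]
        calc |(x:ℝ)| < 2 ^ M1 := hM1
          _ ≤ 2 ^ M := pow_le_pow_right₀ one_le_two (le_max_right _ _)
    set δ := Metric.infDist (x : ℝ) (O n M)ᶜ with hδdef
    have hδ : 0 < δ := by
      rw [hδdef]
      exact ((((hOopen n M).isClosed_compl).notMem_iff_infDist_pos (hOcne n M)).mp
        (by simpa using hxO))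
    obtain ⟨M2, hM2⟩ := pow_unbounded_of_one_lt (2 / δ) (by norm_num : (1:ℝ) < 2)
    rw [eventually_atTop]
    refine ⟨max M M2, fun m hm => ?_⟩
    have hmM : M ≤ m := le_trans (le_max_left _ _) hm
    have hmM2 : M2 ≤ m := le_trans (le_max_right _ _) hm
    have hdist : δ ≤ Metric.infDist (x : ℝ) (O n m)ᶜ := by
      rw [hδdef]
      exact Metric.infDist_le_infDist_of_subset
        (Set.compl_subset_compl.mpr (hOmono n hmM)) (hOcne n m)
    have h2m : (2 : ℝ) / δ < 2 ^ m :=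
      lt_of_lt_of_le hM2 (pow_le_pow_right₀ one_le_two hmM2)
    have hle : (2 : ℝ) ≤ 2 ^ m * Metric.infDist (x : ℝ) (O n m)ᶜ := by
      have h2' : 2 < 2 ^ m * δ := by
        rw [div_lt_iff₀ hδ] at h2m
        linarith
      nlinarith [pow_pos (by norm_num : (0:ℝ) < 2) m]
    have hmx : max 0 (2 - 2 ^ m * Metric.infDist (x : ℝ) (O n m)ᶜ) = 0 :=
      max_eq_left (by linarith)
    show min 1 (max 0 (2 - 2 ^ m * Metric.infDist (x : ℝ) (O n m)ᶜ)) = 0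
    rw [hmx]
    exact min_eq_right zero_le_one
  -- The merged function sequence
  set F : ℕ → X → ℝ := fun m x => ∑' n, (1/2 : ℝ) ^ n * g n m (x : ℝ) with hF
  have hsumm : ∀ m (x : X), Summable fun n => (1/2 : ℝ) ^ n * g n m (x : ℝ) := by
    intro m x
    refine Summable.of_nonneg_of_le (fun n => ?_) (fun n => ?_) summable_geometric_two
    · exact mul_nonneg (by positivity) (hg0 n m _)
    · calc (1/2 : ℝ) ^ n * g n m (x : ℝ) ≤ (1/2 : ℝ) ^ n * 1 := by
            exact mul_le_mul_of_nonneg_left (hg1 n m _) (by positivity)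
        _ = (1/2 : ℝ) ^ n := mul_one _
  have hFcont : ∀ m, Continuous (F m) := by
    intro m
    refine continuous_tsum (fun n => ?_) summable_geometric_two (fun n x => ?_)
    · exact continuous_const.mul ((hgcont n m).comp continuous_subtype_val)
    · rw [Real.norm_eq_abs, abs_mul, abs_of_nonneg (by positivity : (0:ℝ) ≤ (1/2:ℝ)^n),
        abs_of_nonneg (hg0 n m _)]
      calc (1/2 : ℝ) ^ n * g n m (x : ℝ) ≤ (1/2 : ℝ) ^ n * 1 :=
            mul_le_mul_of_nonneg_left (hg1 n m _) (by positivity)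
        _ = (1/2 : ℝ) ^ n := mul_one _
  have hFtend : ∀ x : X, Tendsto (fun m => F m x) atTop (nhds 0) := by
    intro x
    have h0 : (0 : ℝ) = ∑' n : ℕ, (0 : ℝ) := by simp
    rw [hF]
    rw [h0]
    refine tendsto_tsum_of_dominated_convergence
      (f := fun m n => (1/2 : ℝ) ^ n * g n m (x : ℝ)) (g := fun _ => (0:ℝ))
      (bound := fun n => (1/2 : ℝ) ^ n) summable_geometric_two (fun n => ?_) ?_
    · refine Tendsto.congr' ?_ tendsto_const_nhds
      filter_upwards [hgev n x] with m hm
      rw [hm, mul_zero]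
    · refine Eventually.of_forall (fun m n => ?_)
      rw [Real.norm_eq_abs, abs_mul, abs_of_nonneg (by positivity : (0:ℝ) ≤ (1/2:ℝ)^n),
        abs_of_nonneg (hg0 n m _)]
      calc (1/2 : ℝ) ^ n * g n m (x : ℝ) ≤ (1/2 : ℝ) ^ n * 1 :=
            mul_le_mul_of_nonneg_left (hg1 n m _) (by positivity)
        _ = (1/2 : ℝ) ^ n := mul_one _
  -- Apply wQN
  obtain ⟨φ, hφ, ε, hεpos, hεlim, hεF⟩ := h F hFcont hFtend
  -- indices where ε is small
  have hk0 : ∀ n, ∃ K, ∀ k ≥ K, ε k < (1/2 : ℝ) ^ n := by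
    intro n
    exact eventually_atTop.mp (hεlim.eventually_lt_const (by positivity))
  choose k0 hk0 using hk0
  -- the selection
  set s : ℕ → ℕ := fun n => φ (max (k0 n) n) with hs
  refine ⟨fun n => (V n) '' (Set.Iic (s n)), fun n => ⟨?_, (Set.finite_Iic _).image _⟩, ?_⟩
  · rintro U ⟨j, -, rfl⟩
    exact hVmem n j
  · intro x
    obtain ⟨K, hK⟩ := eventually_atTop.mp (hεF x)
    rw [eventually_atTop]
    refine ⟨K, fun n hn => ?_⟩
    set k := max (k0 n) n with hk
    have hkK : K ≤ k := le_trans hn (le_max_right _ _)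
    have hFlt : |F (φ k) x| < ε k := hK k hkK
    have hFnonneg : 0 ≤ F (φ k) x := tsum_nonneg (fun n' =>
      mul_nonneg (by positivity) (hg0 n' (φ k) _))
    have hFlt2 : F (φ k) x < (1/2 : ℝ) ^ n := by
      have := hk0 n k (le_max_left _ _)
      rw [abs_of_nonneg hFnonneg] at hFlt
      linarith
    have hterm : (1/2 : ℝ) ^ n * g n (φ k) (x : ℝ) ≤ F (φ k) x :=
      Summable.le_tsum (hsumm (φ k) x) n (fun n' _ =>
        mul_nonneg (by positivity) (hg0 n' (φ k) _))
    have hglt : g n (φ k) (x : ℝ) < 1 := by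
      have hp : (0:ℝ) < (1/2 : ℝ) ^ n := by positivity
      nlinarith
    have hxO : (x : ℝ) ∈ O n (φ k) := hgmem n (φ k) _ hglt
    obtain ⟨j, hj, hxW⟩ := Set.mem_iUnion₂.mp hxO.1
    refine ⟨V n j, ⟨j, ?_, rfl⟩, ?_⟩
    · exact hj
    · rw [← hWeq n j]; exact hxW
end
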